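/- For every real α with 1 < α < 2: g_0^{(α)} = Γ(α+1)/Γ(α/2+1)² > 0, and for every integer k the recursion g_k^{(α)} = (1 − (α+1)/(α/2 + k)) · g_{k−1}^{(α)} holds; moreover g_k^{(α)} < 0 for every integer k with k ≠ 0. -/

import Mathlib

open Real

/-- The fractional centred difference coefficients
`g_k^{(α)} = ((−1)^k Γ(α+1)) / (Γ(α/2 − k + 1) Γ(α/2 + k + 1))`. -/
noncomputable def fracCoeff (α : ℝ) (k : ℤ) : ℝ :=
  ((-1 : ℝ) ^ k * Real.Gamma (α + 1)) /
    (Real.Gamma (α / 2 - (k : ℝ) + 1) * Real.Gamma (α / 2 + (k : ℝ) + 1))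

lemma half_ne_int (α : ℝ) (hα1 : 1 < α) (hα2 : α < 2) (n : ℤ) : α / 2 + (n : ℝ) ≠ 0 := by
  intro h
  have h1 : (1:ℝ)/2 < α/2 := by linarith
  have h2 : α/2 < 1 := by linarith
  have : ((-n : ℤ) : ℝ) = α/2 := by push_cast; linarith
  rcases le_or_gt (-n) 0 with h3 | h3
  · have : ((-n:ℤ):ℝ) ≤ 0 := by exact_mod_cast h3
    linarith
  · have : (1:ℝ) ≤ ((-n:ℤ):ℝ) := by exact_mod_cast h3
    linarith

lemma gamma_arg_ne (α : ℝ) (hα1 : 1 < α) (hα2 : α < 2) (x : ℝ) (n : ℤ)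
    (hx : x = α / 2 + (n : ℝ)) : Real.Gamma x ≠ 0 := by
  subst hx
  apply Real.Gamma_ne_zero
  intro m h
  have := half_ne_int α hα1 hα2 (n + m)
  apply this
  push_cast
  linarith

lemma frac_rec (α : ℝ) (hα1 : 1 < α) (hα2 : α < 2) (k : ℤ) :
    fracCoeff α k = (1 - (α + 1) / (α / 2 + (k : ℝ))) * fracCoeff α (k - 1) := by
  unfold fracCoeff
  have hne : α / 2 + (k : ℝ) ≠ 0 := half_ne_int α hα1 hα2 k
  have hne2 : α / 2 - (k : ℝ) + 1 ≠ 0 := by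
    intro h; apply half_ne_int α hα1 hα2 (1 - k); push_cast; linarith
  have g1 : Real.Gamma (α / 2 - ((k - 1 : ℤ) : ℝ) + 1)
      = (α / 2 - (k : ℝ) + 1) * Real.Gamma (α / 2 - (k : ℝ) + 1) := by
    have : α / 2 - ((k - 1 : ℤ) : ℝ) + 1 = (α / 2 - (k : ℝ) + 1) + 1 := by push_cast; ring
    rw [this, Real.Gamma_add_one hne2]
  have g2 : Real.Gamma (α / 2 + (k : ℝ) + 1)
      = (α / 2 + (k : ℝ)) * Real.Gamma (α / 2 + (k : ℝ)) := by
    have : α / 2 + (k : ℝ) + 1 = (α / 2 + (k : ℝ)) + 1 := by ring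
    rw [this, Real.Gamma_add_one hne]
  have g3 : α / 2 + ((k - 1 : ℤ) : ℝ) + 1 = α / 2 + (k : ℝ) := by push_cast; ring
  have hp : ((-1 : ℝ)) ^ (k - 1) = -((-1 : ℝ)) ^ k := by
    rw [zpow_sub_one₀ (by norm_num : (-1:ℝ) ≠ 0)]; ring
  have hg1 : Real.Gamma (α / 2 - (k : ℝ) + 1) ≠ 0 :=
    gamma_arg_ne α hα1 hα2 _ (1 - k) (by push_cast; ring)
  have hg2 : Real.Gamma (α / 2 + (k : ℝ)) ≠ 0 :=
    gamma_arg_ne α hα1 hα2 _ k rfl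
  have hne' : α + (k : ℝ) * 2 ≠ 0 := by
    intro h; apply hne; linarith
  have hne2' : α + 2 - (k : ℝ) * 2 ≠ 0 := by
    intro h; apply hne2; linarith
  have hfac : 1 - (α + 1) / (α / 2 + (k : ℝ)) = -(α / 2 - (k : ℝ) + 1) / (α / 2 + (k : ℝ)) := by
    rw [eq_div_iff hne, sub_mul, div_mul_cancel₀ _ hne]
    ring
  rw [g1, g2, g3, hp, hfac]
  set a := α / 2 - (k : ℝ) + 1 with ha'
  set b := α / 2 + (k : ℝ) with hb'
  set G := Real.Gamma (α + 1) with hG'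
  set Γd := Real.Gamma a with hΓd'
  set Γu := Real.Gamma b with hΓu'
  field_simp

lemma frac_symm (α : ℝ) (k : ℤ) : fracCoeff α (-k) = fracCoeff α k := by
  unfold fracCoeff
  have h1 : ((-1 : ℝ)) ^ (-k) = ((-1 : ℝ)) ^ k := by
    rcases Int.even_or_odd k with he | ho
    · rw [he.neg_one_zpow, (by simpa using he.neg : Even (-k)).neg_one_zpow]
    · rw [ho.neg_one_zpow, (by simpa using ho.neg : Odd (-k)).neg_one_zpow]
  rw [h1]
  push_cast
  ring_nf

lemma frac_zero_pos (α : ℝ) (hα1 : 1 < α) (hα2 : α < 2) : 0 < fracCoeff α 0 := by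
  unfold fracCoeff
  simp only [zpow_zero, Int.cast_zero, sub_zero, add_zero, one_mul]
  apply div_pos
  · exact Real.Gamma_pos_of_pos (by linarith)
  · have := Real.Gamma_pos_of_pos (show (0:ℝ) < α / 2 + 1 by linarith)
    nlinarith

lemma frac_nat_neg (α : ℝ) (hα1 : 1 < α) (hα2 : α < 2) :
    ∀ n : ℕ, fracCoeff α ((n : ℤ) + 1) < 0 := by
  intro n
  induction n with
  | zero =>
      have h := frac_rec α hα1 hα2 1
      simp only [Int.cast_one] at h
      norm_num at h ⊢
      rw [h]
      have hfac : 1 - (α + 1) / (α / 2 + 1) < 0 := by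
        rw [sub_neg, lt_div_iff₀ (by linarith : (0:ℝ) < α / 2 + 1)]
        linarith
      have := frac_zero_pos α hα1 hα2
      nlinarith
  | succ n ih =>
      have h := frac_rec α hα1 hα2 ((n : ℤ) + 2)
      have hk : (((n : ℤ) + 2 : ℤ) : ℝ) = (n : ℝ) + 2 := by push_cast; ring
      rw [hk] at h
      have heq : ((n : ℤ) + 2 - 1 : ℤ) = (n : ℤ) + 1 := by ring
      rw [heq] at h
      have hfac : 0 < 1 - (α + 1) / (α / 2 + ((n : ℝ) + 2)) := by
        rw [sub_pos, div_lt_one (by positivity)]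
        have : (0:ℝ) ≤ (n : ℝ) := Nat.cast_nonneg n
        linarith
      have h2 : (((n + 1 : ℕ) : ℤ) + 1 : ℤ) = (n : ℤ) + 2 := by push_cast; ring
      rw [h2, h]
      exact mul_neg_of_pos_of_neg hfac ih

theorem fracCoeff_zero_pos_recursion_neg (α : ℝ) (hα1 : 1 < α) (hα2 : α < 2) :
    fracCoeff α 0 = Real.Gamma (α + 1) / (Real.Gamma (α / 2 + 1)) ^ 2 ∧
    0 < fracCoeff α 0 ∧
    (∀ k : ℤ, fracCoeff α k = (1 - (α + 1) / (α / 2 + (k : ℝ))) * fracCoeff α (k - 1)) ∧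
    (∀ k : ℤ, k ≠ 0 → fracCoeff α k < 0) := by
  refine ⟨?_, frac_zero_pos α hα1 hα2, frac_rec α hα1 hα2, ?_⟩
  · unfold fracCoeff
    simp [sq]
  · intro k hk
    rcases lt_or_gt_of_ne hk with h | h
    · obtain ⟨n, hn⟩ := Int.eq_ofNat_of_zero_le (by omega : 0 ≤ -k - 1)
      have : k = -((n : ℤ) + 1) := by omega
      rw [this, frac_symm]
      exact frac_nat_neg α hα1 hα2 n
    · obtain ⟨n, hn⟩ := Int.eq_ofNat_of_zero_le (by omega : 0 ≤ k - 1)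
      have : k = (n : ℤ) + 1 := by omega
      rw [this]
      exact frac_nat_neg α hα1 hα2 n
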